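/- Define ψ(z, ν, θ) = φ_H(1 − z, 1 − ν, θ) where φ_H(z, ν, θ) = (1 − zν/(ν² + θ))·ln((θ + ν(ν − z))/θ) + (zν/(ν² + θ))·ln(z/ν). Then for 0 < μ < z < 1 and 0 < θ < 1, the partial derivative of ψ(z, μ, θ) with respect to μ is ≤ 0. -/

import Mathlib

/-- Hoeffding's mean–variance exponent
`φ_H(z, ν, θ) = (1 − zν/(ν²+θ))·ln((θ + ν(ν−z))/θ) + (zν/(ν²+θ))·ln(z/ν)`. -/
noncomputable def phiH (z ν θ : ℝ) : ℝ :=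
  (1 - z * ν / (ν ^ 2 + θ)) * Real.log ((θ + ν * (ν - z)) / θ) +
    (z * ν / (ν ^ 2 + θ)) * Real.log (z / ν)

/-- `ψ(z, ν, θ) = φ_H(1 − z, 1 − ν, θ)`. -/
noncomputable def psiH (z ν θ : ℝ) : ℝ := phiH (1 - z) (1 - ν) θ

lemma phiH_hasDerivAt (a b θ : ℝ) (ha : 0 < a) (hab : a < b) (hθ : 0 < θ) :
    HasDerivAt (fun x => phiH a x θ)
      (a * (θ - b ^ 2) / (b ^ 2 + θ) ^ 2 *
          (Real.log (a / b) - Real.log ((θ + b * (b - a)) / θ)) +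
        2 * (b - a) / (b ^ 2 + θ)) b := by
  have hb : 0 < b := ha.trans hab
  have hd1 : (0:ℝ) < b ^ 2 + θ := by positivity
  have hd2 : (0:ℝ) < θ + b * (b - a) := by nlinarith
  -- p(x) = a x / (x²+θ), p'(b) = a(θ-b²)/(b²+θ)²
  have hp : HasDerivAt (fun x : ℝ => a * x / (x ^ 2 + θ))
      (a * (θ - b ^ 2) / (b ^ 2 + θ) ^ 2) b := by
    have h := ((hasDerivAt_id b).const_mul a).div
      ((hasDerivAt_pow 2 b).add_const θ) hd1.ne'
    simp only [id_eq] at h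
    refine h.congr_deriv ?_
    field_simp
    ring
  -- L1(x) = log ((θ + x(x-a))/θ), L1'(b) = (2b-a)/(θ+b(b-a))
  have hL1 : HasDerivAt (fun x : ℝ => Real.log ((θ + x * (x - a)) / θ))
      ((2 * b - a) / (θ + b * (b - a))) b := by
    have hin : HasDerivAt (fun x : ℝ => (θ + x * (x - a)) / θ)
        ((2 * b - a) / θ) b := by
      have h := (((hasDerivAt_id b).mul ((hasDerivAt_id b).sub_const a)).const_add θ).div_const θ
      simp only [id_eq] at h
      refine h.congr_deriv ?_
      ring
    have h := hin.log (by positivity)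
    convert h using 1
    field_simp
  -- L2(x) = log (a/x), L2'(b) = - (1/b)
  have hL2 : HasDerivAt (fun x : ℝ => Real.log (a / x)) (-(1 / b)) b := by
    have hin : HasDerivAt (fun x : ℝ => a / x) (-(a / b ^ 2)) b := by
      have h := (hasDerivAt_inv hb.ne').const_mul a
      simp only [div_eq_mul_inv]
      refine h.congr_deriv ?_
      field_simp
    have h := hin.log (by positivity)
    convert h using 1
    field_simp
  -- assemble
  have hg : HasDerivAt (fun x => phiH a x θ)
      ((-(a * (θ - b ^ 2) / (b ^ 2 + θ) ^ 2)) * Real.log ((θ + b * (b - a)) / θ)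
        + (1 - a * b / (b ^ 2 + θ)) * ((2 * b - a) / (θ + b * (b - a)))
        + ((a * (θ - b ^ 2) / (b ^ 2 + θ) ^ 2) * Real.log (a / b)
          + (a * b / (b ^ 2 + θ)) * (-(1 / b)))) b := by
    unfold phiH
    exact ((hp.const_sub 1).mul hL1).add (hp.mul hL2)
  convert hg using 1
  have e1 : (1 - a * b / (b ^ 2 + θ)) * ((2 * b - a) / (θ + b * (b - a)))
      + (a * b / (b ^ 2 + θ)) * (-(1 / b)) = 2 * (b - a) / (b ^ 2 + θ) := by
    field_simp
    ring
  linear_combination -e1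

lemma F_nonneg (a b θ : ℝ) (ha : 0 < a) (hab : a < b) (hθ : 0 < θ) :
    0 ≤ a * (θ - b ^ 2) / (b ^ 2 + θ) ^ 2 *
        (Real.log (a / b) - Real.log ((θ + b * (b - a)) / θ)) +
      2 * (b - a) / (b ^ 2 + θ) := by
  have hb : 0 < b := ha.trans hab
  have hd1 : (0:ℝ) < b ^ 2 + θ := by positivity
  have hd2 : (0:ℝ) < θ + b * (b - a) := by nlinarith
  have hba : 0 ≤ b - a := by linarith
  have hsecond : 0 ≤ 2 * (b - a) / (b ^ 2 + θ) := by
    apply div_nonneg (by linarith) hd1.le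
  set r := a * θ / (b * (θ + b * (b - a))) with hrdef
  have hr : 0 < r := by positivity
  have hlogr : 1 - r⁻¹ ≤ Real.log r := by
    have h := Real.log_le_sub_one_of_pos (show (0:ℝ) < 1 / r by positivity)
    rw [one_div, Real.log_inv] at h
    linarith
  have heq : Real.log (a / b) - Real.log ((θ + b * (b - a)) / θ) = Real.log r := by
    rw [← Real.log_div (by positivity) (by positivity), hrdef]
    congr 1
    field_simp
  rcases le_or_gt θ (b ^ 2) with hcase | hcase
  · have h1 : a * (θ - b ^ 2) / (b ^ 2 + θ) ^ 2 ≤ 0 := by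
      apply div_nonpos_of_nonpos_of_nonneg
      · nlinarith
      · positivity
    have h2 : Real.log (a / b) - Real.log ((θ + b * (b - a)) / θ) ≤ 0 := by
      have : Real.log (a / b) ≤ Real.log ((θ + b * (b - a)) / θ) := by
        apply Real.log_le_log (by positivity)
        rw [div_le_div_iff₀ hb hθ]
        nlinarith
      linarith
    nlinarith [mul_nonneg (neg_nonneg.2 h1) (neg_nonneg.2 h2)]
  · have hK : 0 ≤ a * (θ - b ^ 2) / (b ^ 2 + θ) ^ 2 := by
      apply div_nonneg _ (by positivity)
      nlinarith
    have h5 : a * (θ - b ^ 2) / (b ^ 2 + θ) ^ 2 * (1 - r⁻¹) ≤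
        a * (θ - b ^ 2) / (b ^ 2 + θ) ^ 2 *
          (Real.log (a / b) - Real.log ((θ + b * (b - a)) / θ)) := by
      rw [heq]
      exact mul_le_mul_of_nonneg_left hlogr hK
    have h6 : a * (θ - b ^ 2) / (b ^ 2 + θ) ^ 2 * (1 - r⁻¹) +
        2 * (b - a) / (b ^ 2 + θ) = (b - a) / θ := by
      rw [hrdef]
      field_simp
      ring
    have h7 : 0 ≤ (b - a) / θ := div_nonneg (by linarith) hθ.le
    linarith

/-- For `0 < μ < z < 1` and `0 < θ < 1`, `∂ψ/∂μ ≤ 0`. -/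
theorem psiH_deriv_mu_nonpos (z μ θ : ℝ) (hμ : 0 < μ) (hμz : μ < z) (hz : z < 1)
    (hθ0 : 0 < θ) (hθ1 : θ < 1) :
    deriv (fun ν : ℝ => psiH z ν θ) μ ≤ 0 := by
  have ha : 0 < 1 - z := by linarith
  have hab : 1 - z < 1 - μ := by linarith
  have hF := phiH_hasDerivAt (1 - z) (1 - μ) θ ha hab hθ0
  have hinner : HasDerivAt (fun ν : ℝ => 1 - ν) (-1) μ := by
    simpa using (hasDerivAt_id μ).const_sub 1
  have hcomp : HasDerivAt (fun ν : ℝ => psiH z ν θ)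
      (((1 - z) * (θ - (1 - μ) ^ 2) / ((1 - μ) ^ 2 + θ) ^ 2 *
          (Real.log ((1 - z) / (1 - μ)) -
            Real.log ((θ + (1 - μ) * ((1 - μ) - (1 - z))) / θ)) +
        2 * ((1 - μ) - (1 - z)) / ((1 - μ) ^ 2 + θ)) * (-1)) μ :=
    hF.comp μ hinner
  rw [hcomp.deriv, mul_neg_one, neg_nonpos]
  exact F_nonneg (1 - z) (1 - μ) θ ha hab hθ0
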